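/- For F_{2^m}(x) over F_2, the identity F_{2^m}(x) = x^{2^m - 1} holds for all m ≥ 0. -/
import Mathlib


noncomputable def fibPoly (R : Type*) [CommRing R] : ℕ → Polynomial R
  | 0 => 0
  | 1 => 1
  | n + 2 => Polynomial.X * fibPoly R (n + 1) + fibPoly R n

lemma fibPoly_succ_succ (R : Type*) [CommRing R] (n : ℕ) :
    fibPoly R (n + 2) = Polynomial.X * fibPoly R (n + 1) + fibPoly R n := rfl

lemma fibPoly_add (R : Type*) [CommRing R] (m n : ℕ) :
    fibPoly R (m + n + 1) =
      fibPoly R (m + 1) * fibPoly R (n + 1) + fibPoly R m * fibPoly R n := by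
  induction n using Nat.twoStepInduction generalizing m with
  | zero => simp [fibPoly]
  | one =>
      show fibPoly R (m + 2) = _
      simp [fibPoly]
      ring
  | more n ih1 ih2 =>
      have h1 : m + (n + 2) + 1 = (m + n + 1) + 2 := by ring
      have h2 : m + n + 1 + 1 = m + (n + 1) + 1 := by ring
      rw [h1, fibPoly_succ_succ, h2, ih2, ih1,
        show n + 2 + 1 = (n + 1) + 2 by ring, fibPoly_succ_succ R (n+1),
        fibPoly_succ_succ R n]
      ring

lemma fibPoly_two_mul (k : ℕ) :
    fibPoly (ZMod 2) (2 * (k + 1)) =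
      Polynomial.X * fibPoly (ZMod 2) (k + 1) ^ 2 := by
  have h : 2 * (k + 1) = k + (k + 1) + 1 := by ring
  rw [h, fibPoly_add, show k + 1 + 1 = k + 2 by ring, fibPoly_succ_succ]
  linear_combination fibPoly (ZMod 2) k * fibPoly (ZMod 2) (k + 1) *
    (CharTwo.two_eq_zero : (2 : Polynomial (ZMod 2)) = 0)

theorem fibPoly_two_pow (m : ℕ) :
    fibPoly (ZMod 2) (2 ^ m) = Polynomial.X ^ (2 ^ m - 1) := by
  induction m with
  | zero => simp [fibPoly]
  | succ m ih =>
      obtain ⟨k, hk⟩ : ∃ k, 2 ^ m = k + 1 := ⟨2 ^ m - 1, by have := Nat.one_le_pow m 2 (by norm_num); omega⟩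
      have h2 : 2 ^ (m + 1) = 2 * (k + 1) := by rw [pow_succ, hk]; ring
      rw [h2, fibPoly_two_mul, ← hk, ih, ← pow_mul, ← pow_succ']
      congr 1
      have h1 : 1 ≤ 2 ^ m := Nat.one_le_pow _ _ (by norm_num)
      omega
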